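/- Let m ≥ 1, g ≥ 2, γ ∈ ZMod m, and let W = W(m, g, γ) be the twist group defined in the context, acting on V = Fin g → ZMod m × ZMod m. Assume that m is odd, or that 2 ∣ m and the image of γ under the natural ring homomorphism ZMod m → ZMod 2 is 0. Then for every x ∈ V there exists σ ∈ W such that (σ x) 0 = (0, 1) and (σ x) i = (1, 1) for all i ≠ 0. (This is the second part of Lemma 5.4: if m is odd or some contour around a hole or puncture carries an even value, the standard basis can be chosen with values (0, 1, 1, …, 1) on the handle generators.) -/
import Mathlib


/-- Shear of the `β`-components of `x : Fin g → ZMod m × ZMod m` by an amount depending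
only on the `α`-components. -/
def shearB (m g : ℕ) (h : (Fin g → ZMod m) → Fin g → ZMod m) :
    Equiv.Perm (Fin g → ZMod m × ZMod m) where
  toFun x k := ((x k).1, (x k).2 + h (fun l => (x l).1) k)
  invFun x k := ((x k).1, (x k).2 - h (fun l => (x l).1) k)
  left_inv x := by funext k; simp
  right_inv x := by funext k; simp

/-- Shear of the `α`-components of `x : Fin g → ZMod m × ZMod m` by an amount depending
only on the `β`-components. -/
def shearA (m g : ℕ) (h : (Fin g → ZMod m) → Fin g → ZMod m) :
    Equiv.Perm (Fin g → ZMod m × ZMod m) where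
  toFun x k := ((x k).1 + h (fun l => (x l).2) k, (x k).2)
  invFun x k := ((x k).1 - h (fun l => (x l).2) k, (x k).2)
  left_inv x := by funext k; simp
  right_inv x := by funext k; simp

/-- Apply the permutation `e` of `ZMod m × ZMod m` at the single coordinate `i`. -/
def atC (m g : ℕ) (i : Fin g) (e : Equiv.Perm (ZMod m × ZMod m)) :
    Equiv.Perm (Fin g → ZMod m × ZMod m) :=
  Equiv.piCongrRight fun k => if k = i then e else Equiv.refl _

/-- `(α, β) ↦ (−α, −β)`. -/
def negPair (m : ℕ) : Equiv.Perm (ZMod m × ZMod m) where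
  toFun p := (-p.1, -p.2)
  invFun p := (-p.1, -p.2)
  left_inv := by rintro ⟨a, b⟩; simp
  right_inv := by rintro ⟨a, b⟩; simp

/-- `(α, β) ↦ (−β, α)`. -/
def rotPair (m : ℕ) : Equiv.Perm (ZMod m × ZMod m) where
  toFun p := (-p.2, p.1)
  invFun p := (p.2, -p.1)
  left_inv := by rintro ⟨a, b⟩; simp
  right_inv := by rintro ⟨a, b⟩; simp

/-- `(α, β) ↦ (−β, α − γ − 1)`. -/
def t3Pair (m : ℕ) (γ : ZMod m) : Equiv.Perm (ZMod m × ZMod m) where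
  toFun p := (-p.2, p.1 - γ - 1)
  invFun p := (p.2 + γ + 1, -p.1)
  left_inv := by rintro ⟨a, b⟩; simp [Prod.ext_iff]; ring
  right_inv := by rintro ⟨a, b⟩; simp [Prod.ext_iff]; ring

/-- Dehn twist action `T1a(i) : (αᵢ, βᵢ) ↦ (αᵢ+βᵢ, βᵢ)`. -/
def T1a (m g : ℕ) (i : Fin g) : Equiv.Perm (Fin g → ZMod m × ZMod m) :=
  shearA m g fun b k => if k = i then b i else 0

/-- Dehn twist action `T1b(i) : (αᵢ, βᵢ) ↦ (αᵢ, βᵢ+αᵢ)`. -/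
def T1b (m g : ℕ) (i : Fin g) : Equiv.Perm (Fin g → ZMod m × ZMod m) :=
  shearB m g fun a k => if k = i then a i else 0

/-- Dehn twist action `T2(i,j) : βᵢ ↦ βᵢ − αⱼ − 1, βⱼ ↦ βⱼ − αᵢ − 1`. -/
def T2 (m g : ℕ) (i j : Fin g) : Equiv.Perm (Fin g → ZMod m × ZMod m) :=
  shearB m g fun a k => if k = i then -a j - 1 else if k = j then -a i - 1 else 0

/-- Dehn twist action `T3` at the index `i`: `(αᵢ, βᵢ) ↦ (−βᵢ, αᵢ − γ − 1)`. -/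
def T3 (m g : ℕ) (i : Fin g) (γ : ZMod m) : Equiv.Perm (Fin g → ZMod m × ZMod m) :=
  atC m g i (t3Pair m γ)

/-- Dehn twist action `T4(i,j)`: interchange the pairs at positions `i` and `j`. -/
def T4 (m g : ℕ) (i j : Fin g) : Equiv.Perm (Fin g → ZMod m × ZMod m) :=
  Equiv.arrowCongr (Equiv.swap i j) (Equiv.refl _)

/-- Dehn twist action `T5a(i) : (αᵢ, βᵢ) ↦ (−αᵢ, −βᵢ)`. -/
def T5a (m g : ℕ) (i : Fin g) : Equiv.Perm (Fin g → ZMod m × ZMod m) :=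
  atC m g i (negPair m)

/-- Dehn twist action `T5b(i) : (αᵢ, βᵢ) ↦ (−βᵢ, αᵢ)`. -/
def T5b (m g : ℕ) (i : Fin g) : Equiv.Perm (Fin g → ZMod m × ZMod m) :=
  atC m g i (rotPair m)

/-- The generators of the twist group: `T1a(i)`, `T1b(i)`, `T2(i,j)` for `i ≠ j`, `T3` at
the last index, `T4(i,j)` for `i ≠ j`, `T5a(i)`, `T5b(i)`. -/
def twistGens (m g : ℕ) (hg : 0 < g) (γ : ZMod m) :
    Set (Equiv.Perm (Fin g → ZMod m × ZMod m)) :=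
  (Set.range fun i => T1a m g i) ∪ (Set.range fun i => T1b m g i) ∪
    {σ | ∃ i j : Fin g, i ≠ j ∧ σ = T2 m g i j} ∪
    {T3 m g ⟨g - 1, Nat.sub_lt hg Nat.one_pos⟩ γ} ∪
    {σ | ∃ i j : Fin g, i ≠ j ∧ σ = T4 m g i j} ∪
    (Set.range fun i => T5a m g i) ∪ (Set.range fun i => T5b m g i)

/-- The twist group `W(m, g, γ)`: the subgroup of `Equiv.Perm (Fin g → ZMod m × ZMod m)`
generated by the Dehn twist actions. -/
def twistGroup (m g : ℕ) (hg : 0 < g) (γ : ZMod m) :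
    Subgroup (Equiv.Perm (Fin g → ZMod m × ZMod m)) :=
  Subgroup.closure (twistGens m g hg γ)

section Aux
variable {m g : ℕ}

lemma atC_apply (i : Fin g) (e : Equiv.Perm (ZMod m × ZMod m)) (x : Fin g → ZMod m × ZMod m)
    (k : Fin g) : atC m g i e x k = if k = i then e (x k) else x k := by
  simp [atC]
  split <;> simp

lemma shearA_pow_apply (h : (Fin g → ZMod m) → Fin g → ZMod m) (n : ℕ)
    (x : Fin g → ZMod m × ZMod m) :
    ((shearA m g h ^ n) x)
      = fun k => ((x k).1 + n • h (fun l => (x l).2) k, (x k).2) := by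
  induction n generalizing x with
  | zero => simp
  | succ n ih =>
    rw [pow_succ']
    simp only [Equiv.Perm.mul_apply, ih]
    funext k
    simp only [shearA, Equiv.coe_fn_mk]
    rw [succ_nsmul]
    ring_nf

lemma shearB_pow_apply (h : (Fin g → ZMod m) → Fin g → ZMod m) (n : ℕ)
    (x : Fin g → ZMod m × ZMod m) :
    ((shearB m g h ^ n) x)
      = fun k => ((x k).1, (x k).2 + n • h (fun l => (x l).1) k) := by
  induction n generalizing x with
  | zero => simp
  | succ n ih =>
    rw [pow_succ']
    simp only [Equiv.Perm.mul_apply, ih]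
    funext k
    simp only [shearB, Equiv.coe_fn_mk]
    rw [succ_nsmul]
    ring_nf

end Aux
section Mem
variable {m g : ℕ} (hg : 0 < g) (γ : ZMod m)

lemma T1a_mem (i : Fin g) : T1a m g i ∈ twistGroup m g hg γ :=
  Subgroup.subset_closure (by
    left; left; left; left; left; left; exact ⟨i, rfl⟩)

lemma T1b_mem (i : Fin g) : T1b m g i ∈ twistGroup m g hg γ :=
  Subgroup.subset_closure (by
    left; left; left; left; left; right; exact ⟨i, rfl⟩)

lemma T2_mem {i j : Fin g} (hij : i ≠ j) : T2 m g i j ∈ twistGroup m g hg γ :=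
  Subgroup.subset_closure (by
    left; left; left; left; right; exact ⟨i, j, hij, rfl⟩)

lemma T3_mem : T3 m g ⟨g - 1, Nat.sub_lt hg Nat.one_pos⟩ γ ∈ twistGroup m g hg γ :=
  Subgroup.subset_closure (by
    left; left; left; right; rfl)

lemma T5a_mem (i : Fin g) : T5a m g i ∈ twistGroup m g hg γ :=
  Subgroup.subset_closure (by
    left; right; exact ⟨i, rfl⟩)

lemma T5b_mem (i : Fin g) : T5b m g i ∈ twistGroup m g hg γ :=
  Subgroup.subset_closure (by
    right; exact ⟨i, rfl⟩)

end Mem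

/-- One state is reachable from another via the twist group. -/
def Reach (m g : ℕ) (hg : 0 < g) (γ : ZMod m) (x y : Fin g → ZMod m × ZMod m) : Prop :=
  ∃ σ ∈ twistGroup m g hg γ, σ x = y

section ReachLemmas
variable {m g : ℕ} {hg : 0 < g} {γ : ZMod m}

lemma Reach.refl {x : Fin g → ZMod m × ZMod m} : Reach m g hg γ x x :=
  ⟨1, one_mem _, by rfl⟩

lemma Reach.trans {x y z : Fin g → ZMod m × ZMod m} (h1 : Reach m g hg γ x y)
    (h2 : Reach m g hg γ y z) : Reach m g hg γ x z := by
  obtain ⟨σ, hσ, rfl⟩ := h1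
  obtain ⟨τ, hτ, rfl⟩ := h2
  exact ⟨τ * σ, mul_mem hτ hσ, by rfl⟩

lemma Reach.step {σ : Equiv.Perm (Fin g → ZMod m × ZMod m)}
    (hσ : σ ∈ twistGroup m g hg γ) (x : Fin g → ZMod m × ZMod m) :
    Reach m g hg γ x (σ x) := ⟨σ, hσ, by rfl⟩

lemma Reach.stepPow {σ : Equiv.Perm (Fin g → ZMod m × ZMod m)}
    (hσ : σ ∈ twistGroup m g hg γ) (n : ℕ) (x : Fin g → ZMod m × ZMod m) :
    Reach m g hg γ x ((σ ^ n) x) := ⟨σ ^ n, pow_mem hσ n, by rfl⟩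

end ReachLemmas
section Steps
variable {m g : ℕ} {hg : 0 < g} {γ : ZMod m} [NeZero m]

lemma zmod_cast_val (z : ZMod m) : ((z.val : ℕ) : ZMod m) = z := by
  simp [ZMod.natCast_val, ZMod.cast_id]

lemma stepT1a (i : Fin g) (z : ZMod m) (x : Fin g → ZMod m × ZMod m) :
    Reach m g hg γ x (Function.update x i ((x i).1 + z * (x i).2, (x i).2)) := by
  have h := Reach.stepPow (hg := hg) (γ := γ) (T1a_mem hg γ i) z.val x
  convert h using 1
  rw [show T1a m g i = shearA m g (fun b k => if k = i then b i else 0) from rfl,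
    shearA_pow_apply]
  funext k
  rcases eq_or_ne k i with rfl | hk
  · simp [Function.update, nsmul_eq_mul, zmod_cast_val]
  · simp [Function.update, hk]

lemma stepT1b (i : Fin g) (z : ZMod m) (x : Fin g → ZMod m × ZMod m) :
    Reach m g hg γ x (Function.update x i ((x i).1, (x i).2 + z * (x i).1)) := by
  have h := Reach.stepPow (hg := hg) (γ := γ) (T1b_mem hg γ i) z.val x
  convert h using 1
  rw [show T1b m g i = shearB m g (fun a k => if k = i then a i else 0) from rfl,
    shearB_pow_apply]
  funext k
  rcases eq_or_ne k i with rfl | hk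
  · simp [Function.update, nsmul_eq_mul, zmod_cast_val]
  · simp [Function.update, hk]

lemma stepT2 {i j : Fin g} (hij : i ≠ j) (z : ZMod m) (x : Fin g → ZMod m × ZMod m) :
    Reach m g hg γ x
      (Function.update (Function.update x i ((x i).1, (x i).2 + z * (-(x j).1 - 1)))
        j ((x j).1, (x j).2 + z * (-(x i).1 - 1))) := by
  have h := Reach.stepPow (hg := hg) (γ := γ) (T2_mem hg γ hij) z.val x
  convert h using 1
  rw [show T2 m g i j = shearB m g
      (fun a k => if k = i then -a j - 1 else if k = j then -a i - 1 else 0) from rfl,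
    shearB_pow_apply]
  funext k
  rcases eq_or_ne k j with rfl | hkj
  · simp [Function.update, hij.symm, nsmul_eq_mul, zmod_cast_val, mul_comm]
  · rcases eq_or_ne k i with rfl | hki
    · simp [Function.update, hij, hkj, nsmul_eq_mul, zmod_cast_val, mul_comm]
    · simp [Function.update, hki, hkj]

lemma stepT3 (x : Fin g → ZMod m × ZMod m) :
    Reach m g hg γ x
      (Function.update x ⟨g - 1, Nat.sub_lt hg Nat.one_pos⟩
        (-(x ⟨g - 1, Nat.sub_lt hg Nat.one_pos⟩).2,
          (x ⟨g - 1, Nat.sub_lt hg Nat.one_pos⟩).1 - γ - 1)) := by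
  have h := Reach.step (hg := hg) (T3_mem hg γ) x
  convert h using 1
  funext k
  rw [show T3 m g ⟨g - 1, Nat.sub_lt hg Nat.one_pos⟩ γ
      = atC m g ⟨g - 1, Nat.sub_lt hg Nat.one_pos⟩ (t3Pair m γ) from rfl, atC_apply]
  rcases eq_or_ne k ⟨g - 1, Nat.sub_lt hg Nat.one_pos⟩ with rfl | hk
  · simp [Function.update, t3Pair]
  · simp [Function.update, hk]

lemma stepT5a (i : Fin g) (x : Fin g → ZMod m × ZMod m) :
    Reach m g hg γ x (Function.update x i (-(x i).1, -(x i).2)) := by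
  have h := Reach.step (hg := hg) (T5a_mem hg γ i) x
  convert h using 1
  funext k
  rw [show T5a m g i = atC m g i (negPair m) from rfl, atC_apply]
  rcases eq_or_ne k i with rfl | hk
  · simp [Function.update, negPair]
  · simp [Function.update, hk]

lemma stepT5b (i : Fin g) (x : Fin g → ZMod m × ZMod m) :
    Reach m g hg γ x (Function.update x i (-(x i).2, (x i).1)) := by
  have h := Reach.step (hg := hg) (T5b_mem hg γ i) x
  convert h using 1
  funext k
  rw [show T5b m g i = atC m g i (rotPair m) from rfl, atC_apply]
  rcases eq_or_ne k i with rfl | hk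
  · simp [Function.update, rotPair]
  · simp [Function.update, hk]

end Steps
section Phase1
variable {m g : ℕ} {hg : 0 < g} {γ : ZMod m} [NeZero m] [NeZero g]

lemma phase1 : ∀ (n : ℕ) (x : Fin g → ZMod m × ZMod m), ((x 0).1).val ≤ n →
    ∃ y, Reach m g hg γ x y ∧ (y 0).1 = 0 ∧ ∀ k, k ≠ 0 → y k = x k := by
  intro n
  induction n with
  | zero =>
    intro x hx
    refine ⟨x, Reach.refl, ?_, fun k _ => rfl⟩
    have : ((x 0).1).val = 0 := Nat.le_zero.mp hx
    exact (ZMod.val_eq_zero _).mp this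
  | succ n ih =>
    intro x hx
    rcases eq_or_ne (x 0).1 0 with h0 | h0
    · exact ⟨x, Reach.refl, h0, fun k _ => rfl⟩
    · set a := (x 0).1 with ha
      set b := (x 0).2 with hb
      have hapos : 0 < a.val := Nat.pos_of_ne_zero (fun h => h0 ((ZMod.val_eq_zero _).mp h))
      set q : ℕ := b.val / a.val with hq
      set r : ℕ := b.val % a.val with hr
      have hmod : r + a.val * q = b.val := Nat.mod_add_div _ _
      have hrlt : r < a.val := Nat.mod_lt _ hapos
      -- step 1 : β₀ ↦ b - q a
      have s1 := stepT1b (hg := hg) (γ := γ) (0 : Fin g) (-(q : ZMod m)) x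
      set x₁ := Function.update x 0 ((x 0).1, (x 0).2 + -(q : ZMod m) * (x 0).1) with hx₁
      have hx₁0 : x₁ 0 = (a, (r : ZMod m)) := by
        rw [hx₁, Function.update_self]
        congr 1
        have : b + -(q : ZMod m) * a = ((b.val - a.val * q : ℕ) : ZMod m) := by
          rw [Nat.cast_sub (by omega)]
          push_cast
          rw [zmod_cast_val, zmod_cast_val]
          ring
        rw [this]
        congr 1
        omega
      -- step 2 : rotate
      have s2 := stepT5b (hg := hg) (γ := γ) (0 : Fin g) x₁
      set x₂ := Function.update x₁ 0 (-(x₁ 0).2, (x₁ 0).1) with hx₂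
      -- step 3 : negate
      have s3 := stepT5a (hg := hg) (γ := γ) (0 : Fin g) x₂
      set x₃ := Function.update x₂ 0 (-(x₂ 0).1, -(x₂ 0).2) with hx₃
      have hx₃0 : x₃ 0 = ((r : ZMod m), -a) := by
        rw [hx₃, Function.update_self, hx₂, Function.update_self, hx₁0]
        simp
      have hval : ((x₃ 0).1).val ≤ n := by
        rw [hx₃0]
        have hrm : r < m := lt_of_lt_of_le hrlt (le_of_lt (ZMod.val_lt a))
        have : ((r : ZMod m)).val = r := ZMod.val_cast_of_lt hrm
        rw [this]
        omega
      obtain ⟨y, hy, hy0, hyk⟩ := ih x₃ hval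
      refine ⟨y, (s1.trans (s2.trans (s3.trans hy))), hy0, ?_⟩
      intro k hk
      rw [hyk k hk, hx₃, Function.update_of_ne hk, hx₂, Function.update_of_ne hk,
        hx₁, Function.update_of_ne hk]

end Phase1
section Phase2
variable {m g : ℕ} {hg : 0 < g} {γ : ZMod m} [NeZero m] [NeZero g]

lemma fixCoord (i : Fin g) (hi : i ≠ 0) (x : Fin g → ZMod m × ZMod m)
    (hx : (x 0).1 = 0) :
    ∃ y, Reach m g hg γ x y ∧ y i = (1, 1) ∧ (y 0).1 = 0 ∧
      ∀ k, k ≠ 0 → k ≠ i → y k = x k := by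
  -- set β_i to 1 using T2 i 0
  have s1 := stepT2 (hg := hg) (γ := γ) hi ((x i).2 - 1) x
  set x₁ := Function.update (Function.update x i ((x i).1, (x i).2 + ((x i).2 - 1) * (-(x 0).1 - 1)))
      0 ((x 0).1, (x 0).2 + ((x i).2 - 1) * (-(x i).1 - 1)) with hx₁
  have hx₁i : x₁ i = ((x i).1, 1) := by
    rw [hx₁, Function.update_of_ne hi, Function.update_self, hx]
    congr 1
    ring
  have hx₁0 : (x₁ 0).1 = 0 := by
    rw [hx₁, Function.update_self, hx]
  -- set α_i to 1 using T1a i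
  have s2 := stepT1a (hg := hg) (γ := γ) i (1 - (x₁ i).1) x₁
  set x₂ := Function.update x₁ i ((x₁ i).1 + (1 - (x₁ i).1) * (x₁ i).2, (x₁ i).2) with hx₂
  refine ⟨x₂, s1.trans s2, ?_, ?_, ?_⟩
  · rw [hx₂, Function.update_self, hx₁i]
    simp
  · rw [hx₂, Function.update_of_ne (Ne.symm hi), hx₁0]
  · intro k hk0 hki
    rw [hx₂, Function.update_of_ne hki, hx₁, Function.update_of_ne hk0,
      Function.update_of_ne hki]

lemma phase2 : ∀ (n : ℕ) (x : Fin g → ZMod m × ZMod m),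
    (Finset.univ.filter (fun i => i ≠ 0 ∧ x i ≠ (1, 1))).card ≤ n →
    (x 0).1 = 0 →
    ∃ y, Reach m g hg γ x y ∧ (y 0).1 = 0 ∧ ∀ i, i ≠ 0 → y i = (1, 1) := by
  intro n
  induction n with
  | zero =>
    intro x hcard hx
    refine ⟨x, Reach.refl, hx, fun i hi => ?_⟩
    by_contra hne
    have : i ∈ Finset.univ.filter (fun i => i ≠ 0 ∧ x i ≠ (1, 1)) :=
      Finset.mem_filter.mpr ⟨Finset.mem_univ _, hi, hne⟩
    have := Finset.card_pos.mpr ⟨i, this⟩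
    omega
  | succ n ih =>
    intro x hcard hx
    rcases Finset.eq_empty_or_nonempty
        (Finset.univ.filter (fun i => i ≠ 0 ∧ x i ≠ (1, 1))) with hemp | ⟨i, hi⟩
    · refine ⟨x, Reach.refl, hx, fun i hi => ?_⟩
      by_contra hne
      have : i ∈ Finset.univ.filter (fun i => i ≠ 0 ∧ x i ≠ (1, 1)) :=
        Finset.mem_filter.mpr ⟨Finset.mem_univ _, hi, hne⟩
      rw [hemp] at this
      exact absurd this (Finset.notMem_empty _)
    · simp only [Finset.mem_filter, Finset.mem_univ, true_and] at hi
      obtain ⟨hi0, _⟩ := hi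
      obtain ⟨y, hxy, hyi, hy0, hyk⟩ := fixCoord (hg := hg) (γ := γ) i hi0 x hx
      have hsub : (Finset.univ.filter (fun j => j ≠ 0 ∧ y j ≠ (1, 1)))
          ⊆ (Finset.univ.filter (fun j => j ≠ 0 ∧ x j ≠ (1, 1))).erase i := by
        intro j hj
        simp only [Finset.mem_filter, Finset.mem_univ, true_and] at hj
        obtain ⟨hj0, hjne⟩ := hj
        have hji : j ≠ i := by
          rintro rfl; exact hjne hyi
        rw [Finset.mem_erase]
        refine ⟨hji, ?_⟩
        simp only [Finset.mem_filter, Finset.mem_univ, true_and]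
        exact ⟨hj0, by rw [← hyk j hj0 hji]; exact hjne⟩
      have hcard' : (Finset.univ.filter (fun j => j ≠ 0 ∧ y j ≠ (1, 1))).card ≤ n := by
        have h1 := Finset.card_le_card hsub
        have h2 : ((Finset.univ.filter (fun j => j ≠ 0 ∧ x j ≠ (1, 1))).erase i).card
            < (Finset.univ.filter (fun j => j ≠ 0 ∧ x j ≠ (1, 1))).card := by
          apply Finset.card_erase_lt_of_mem
          simp only [Finset.mem_filter, Finset.mem_univ, true_and]
          exact ⟨hi0, ‹x i ≠ (1, 1)›⟩
        omega
      obtain ⟨z, hyz, hz0, hzk⟩ := ih y hcard' hy0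
      exact ⟨z, hxy.trans hyz, hz0, hzk⟩

end Phase2
section Phase3
variable {m g : ℕ} {hg : 0 < g} {γ : ZMod m} [NeZero m] [NeZero g]

lemma fin_one_ne_zero (hg2 : 2 ≤ g) : (1 : Fin g) ≠ 0 := by
  intro h
  have h1 : (1 : Fin g).val = 1 % g := Fin.val_one' g
  have h0 : (0 : Fin g).val = 0 := rfl
  rw [h] at h1
  rw [h0] at h1
  rw [Nat.mod_eq_of_lt (by omega)] at h1
  omega

lemma evenAdjust (hg2 : 2 ≤ g) (z : ZMod m) (x : Fin g → ZMod m × ZMod m)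
    (hx0 : (x 0).1 = 0) (hx1 : x 1 = (1, 1)) :
    ∃ y, Reach m g hg γ x y ∧ y 0 = (0, (x 0).2 - 2 * z) ∧ ∀ i, i ≠ 0 → y i = x i := by
  have h01 : (0 : Fin g) ≠ 1 := (fin_one_ne_zero hg2).symm
  have s1 := stepT2 (hg := hg) (γ := γ) h01 z x
  set x₁ := Function.update
      (Function.update x 0 ((x 0).1, (x 0).2 + z * (-(x 1).1 - 1)))
      1 ((x 1).1, (x 1).2 + z * (-(x 0).1 - 1)) with hx₁
  have hx₁0 : x₁ 0 = (0, (x 0).2 - 2 * z) := by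
    rw [hx₁, Function.update_of_ne h01, Function.update_self, hx0, hx1]
    exact Prod.ext rfl (by ring)
  have hx₁1 : x₁ 1 = (1, 1 - z) := by
    rw [hx₁, Function.update_self, hx0, hx1]
    exact Prod.ext rfl (by ring)
  have s2 := stepT1b (hg := hg) (γ := γ) (1 : Fin g) z x₁
  set x₂ := Function.update x₁ 1 ((x₁ 1).1, (x₁ 1).2 + z * (x₁ 1).1) with hx₂
  refine ⟨x₂, s1.trans s2, ?_, ?_⟩
  · rw [hx₂, Function.update_of_ne h01, hx₁0]
  · intro i hi
    rcases eq_or_ne i 1 with rfl | hi1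
    · rw [hx₂, Function.update_self, hx₁1, hx1]
      exact Prod.ext rfl (by ring)
    · rw [hx₂, Function.update_of_ne hi1, hx₁, Function.update_of_ne hi1,
        Function.update_of_ne hi]

lemma gadget (hg2 : 2 ≤ g) (x : Fin g → ZMod m × ZMod m)
    (hx0 : (x 0).1 = 0)
    (hxL : x ⟨g - 1, Nat.sub_lt hg Nat.one_pos⟩ = (1, 1)) :
    ∃ y, Reach m g hg γ x y ∧ y 0 = (0, (x 0).2 + γ + 1) ∧
      ∀ i, i ≠ 0 → (x i = (1, 1) → y i = (1, 1)) ∧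
        (i ≠ ⟨g - 1, Nat.sub_lt hg Nat.one_pos⟩ → y i = x i) := by
  set L : Fin g := ⟨g - 1, Nat.sub_lt hg Nat.one_pos⟩ with hL
  have hL0 : L ≠ 0 := by
    intro h
    have := congrArg Fin.val h
    simp [hL] at this
    omega
  have s1 := stepT1b (hg := hg) (γ := γ) L (-1) x
  set x₁ := Function.update x L ((x L).1, (x L).2 + (-1) * (x L).1) with hx₁
  have hx₁L : x₁ L = (1, 0) := by
    rw [hx₁, Function.update_self, hxL]
    exact Prod.ext rfl (by ring)
  have hx₁0 : x₁ 0 = x 0 := by rw [hx₁, Function.update_of_ne hL0.symm]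
  have s2 := stepT3 (hg := hg) (γ := γ) x₁
  set x₂ := Function.update x₁ L (-(x₁ L).2, (x₁ L).1 - γ - 1) with hx₂
  have hx₂L : x₂ L = (0, -γ) := by
    rw [hx₂, Function.update_self, hx₁L]
    exact Prod.ext (by simp) (by ring)
  have hx₂0 : x₂ 0 = x 0 := by rw [hx₂, Function.update_of_ne hL0.symm, hx₁0]
  have s3 := stepT2 (hg := hg) (γ := γ) hL0 (-γ - 1) x₂
  set x₃ := Function.update
      (Function.update x₂ L ((x₂ L).1, (x₂ L).2 + (-γ - 1) * (-(x₂ 0).1 - 1)))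
      0 ((x₂ 0).1, (x₂ 0).2 + (-γ - 1) * (-(x₂ L).1 - 1)) with hx₃
  have hx₃L : x₃ L = (0, 1) := by
    rw [hx₃, Function.update_of_ne hL0, Function.update_self, hx₂L, hx₂0, hx0]
    exact Prod.ext rfl (by ring)
  have hx₃0 : x₃ 0 = (0, (x 0).2 + γ + 1) := by
    rw [hx₃, Function.update_self, hx₂L, hx₂0, hx0]
    exact Prod.ext rfl (by ring)
  have s4 := stepT1a (hg := hg) (γ := γ) L (1 : ZMod m) x₃
  set x₄ := Function.update x₃ L ((x₃ L).1 + 1 * (x₃ L).2, (x₃ L).2) with hx₄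
  refine ⟨x₄, s1.trans (s2.trans (s3.trans s4)), ?_, ?_⟩
  · rw [hx₄, Function.update_of_ne hL0.symm, hx₃0]
  · intro i hi
    rcases eq_or_ne i L with rfl | hiL
    · refine ⟨fun _ => ?_, fun h => absurd rfl h⟩
      rw [hx₄, Function.update_self, hx₃L]
      exact Prod.ext (by ring) rfl
    · have : x₄ i = x i := by
        rw [hx₄, Function.update_of_ne hiL, hx₃, Function.update_of_ne hi,
          Function.update_of_ne hiL, hx₂, Function.update_of_ne hiL,
          hx₁, Function.update_of_ne hiL]
      exact ⟨fun h => by rw [this, h], fun _ => this⟩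

end Phase3
section Phase3Main
variable {m g : ℕ} {hg : 0 < g} {γ : ZMod m} [NeZero m] [NeZero g]

lemma val_add_parity (h2 : (2 : ℕ) ∣ m) (a b : ZMod m) :
    (a + b).val % 2 = (a.val + b.val) % 2 := by
  rw [ZMod.val_add]
  exact Nat.mod_mod_of_dvd _ h2

lemma phase3 (hm : 1 ≤ m) (hg2 : 2 ≤ g)
    (hcase : Odd m ∨ ∃ h2 : (2 : ℕ) ∣ m, ZMod.castHom h2 (ZMod 2) γ = 0)
    (x : Fin g → ZMod m × ZMod m) (hx0 : (x 0).1 = 0)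
    (hx1 : ∀ i, i ≠ 0 → x i = (1, 1)) :
    ∃ y, Reach m g hg γ x y ∧ y 0 = (0, 1) ∧ ∀ i, i ≠ 0 → y i = (1, 1) := by
  rcases hcase with hodd | ⟨h2, hγ⟩
  · -- m odd : 2 is invertible
    set z : ZMod m := (((m + 1) / 2 : ℕ) : ZMod m) * ((x 0).2 - 1) with hz
    obtain ⟨y, hxy, hy0, hyk⟩ := evenAdjust (hg := hg) (γ := γ) hg2 z x hx0
      (hx1 1 (fin_one_ne_zero hg2))
    have h2z : (2 : ZMod m) * z = (x 0).2 - 1 := by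
      obtain ⟨t, ht⟩ := hodd
      have hdiv : 2 * ((m + 1) / 2) = m + 1 := by omega
      have h1 : ((2 * ((m + 1) / 2) : ℕ) : ZMod m) = 1 := by
        rw [hdiv]
        push_cast [ZMod.natCast_self]
        ring
      calc (2 : ZMod m) * z = ((2 * ((m + 1) / 2) : ℕ) : ZMod m) * ((x 0).2 - 1) := by
            rw [hz]; push_cast; ring
        _ = (x 0).2 - 1 := by rw [h1, one_mul]
    refine ⟨y, hxy, ?_, fun i hi => by rw [hyk i hi]; exact hx1 i hi⟩
    rw [hy0]
    congr 1
    rw [show (2 : ZMod m) * z = 2 * z from rfl] at h2z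
    calc (x 0).2 - 2 * z = (x 0).2 - ((x 0).2 - 1) := by rw [h2z]
      _ = 1 := by ring
  · -- m even, γ even
    have hm2 : 2 ≤ m := Nat.le_of_dvd (by omega) h2
    have hγval : 2 ∣ γ.val := by
      have hmap := map_natCast (ZMod.castHom h2 (ZMod 2)) γ.val
      rw [zmod_cast_val] at hmap
      have : ((γ.val : ℕ) : ZMod 2) = 0 := by rw [← hmap]; exact hγ
      exact (ZMod.natCast_eq_zero_iff _ _).mp this
    by_cases hpar : ((x 0).2 - 1).val % 2 = 0
    · -- already even difference
      set z : ZMod m := ((((x 0).2 - 1).val / 2 : ℕ) : ZMod m) with hz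
      obtain ⟨y, hxy, hy0, hyk⟩ := evenAdjust (hg := hg) (γ := γ) hg2 z x hx0
        (hx1 1 (fin_one_ne_zero hg2))
      have h2z : (2 : ZMod m) * z = (x 0).2 - 1 := by
        have hdiv : 2 * (((x 0).2 - 1).val / 2) = ((x 0).2 - 1).val := by omega
        calc (2 : ZMod m) * z = ((2 * (((x 0).2 - 1).val / 2) : ℕ) : ZMod m) := by
              rw [hz]; push_cast; ring
          _ = ((((x 0).2 - 1).val : ℕ) : ZMod m) := by rw [hdiv]
          _ = (x 0).2 - 1 := zmod_cast_val _
      refine ⟨y, hxy, ?_, fun i hi => by rw [hyk i hi]; exact hx1 i hi⟩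
      rw [hy0]
      congr 1
      calc (x 0).2 - 2 * z = (x 0).2 - ((x 0).2 - 1) := by rw [← h2z]
        _ = 1 := by ring
    · -- odd difference : use the gadget first
      obtain ⟨y₁, hxy₁, hy₁0, hy₁k⟩ := gadget (hg := hg) (γ := γ) hg2 x hx0
        (hx1 _ (by
          intro h
          have := congrArg Fin.val h
          simp at this
          omega))
      have hy₁1 : ∀ i, i ≠ 0 → y₁ i = (1, 1) := fun i hi => (hy₁k i hi).1 (hx1 i hi)
      -- parity of the new difference
      have hval1 : (1 : ZMod m).val = 1 := by
        rw [ZMod.val_one_eq_one_mod]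
        exact Nat.mod_eq_of_lt (by omega)
      have hcpar : (x 0).2.val % 2 = 0 := by
        have h := val_add_parity h2 ((x 0).2 - 1) 1
        have hsum : (x 0).2 - 1 + 1 = (x 0).2 := by ring
        rw [hsum, hval1] at h
        omega
      have hnewpar : ((x 0).2 + γ).val % 2 = 0 := by
        have h := val_add_parity h2 ((x 0).2) γ
        obtain ⟨t, ht⟩ := hγval
        omega
      set z : ZMod m := ((((x 0).2 + γ).val / 2 : ℕ) : ZMod m) with hz
      have hy₁0' : (y₁ 0).1 = 0 := by rw [hy₁0]
      obtain ⟨y, hy₁y, hy0, hyk⟩ := evenAdjust (hg := hg) (γ := γ) hg2 z y₁ hy₁0'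
        (hy₁1 1 (fin_one_ne_zero hg2))
      have h2z : (2 : ZMod m) * z = (x 0).2 + γ := by
        have hdiv : 2 * (((x 0).2 + γ).val / 2) = ((x 0).2 + γ).val := by omega
        calc (2 : ZMod m) * z = ((2 * (((x 0).2 + γ).val / 2) : ℕ) : ZMod m) := by
              rw [hz]; push_cast; ring
          _ = ((((x 0).2 + γ).val : ℕ) : ZMod m) := by rw [hdiv]
          _ = (x 0).2 + γ := zmod_cast_val _
      refine ⟨y, hxy₁.trans hy₁y, ?_, fun i hi => by rw [hyk i hi]; exact hy₁1 i hi⟩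
      rw [hy0]
      congr 1
      rw [hy₁0]
      calc (x 0).2 + γ + 1 - 2 * z = (x 0).2 + γ + 1 - ((x 0).2 + γ) := by rw [h2z]
        _ = 1 := by ring

end Phase3Main

/-- Lemma 5.4, second part: if `m` is odd, or `m` is even and the value `γ` on a contour
around a hole or puncture is even, then the tuple of values of an `m`-Arf function on the
handle generators can be transformed by the twist group into `(0, 1, 1, …, 1)`. -/
theorem twist_normalization_odd_or_even_value (m g : ℕ) (hm : 1 ≤ m) (hg : 2 ≤ g)
    (γ : ZMod m)
    (hcase : Odd m ∨ ∃ h2 : (2 : ℕ) ∣ m, ZMod.castHom h2 (ZMod 2) γ = 0)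
    (x : Fin g → ZMod m × ZMod m) :
    ∃ σ ∈ twistGroup m g (by omega) γ,
      (σ x) ⟨0, by omega⟩ = (0, 1) ∧
      ∀ i : Fin g, i ≠ ⟨0, by omega⟩ → (σ x) i = (1, 1) := by
  haveI : NeZero m := ⟨by omega⟩
  haveI : NeZero g := ⟨by omega⟩
  have hg0 : 0 < g := by omega
  have hzero : (⟨0, by omega⟩ : Fin g) = 0 := by
    apply Fin.ext
    simp
  obtain ⟨y₁, hxy₁, hy₁0, _⟩ :=
    phase1 (hg := hg0) (γ := γ) ((x 0).1).val x le_rfl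
  obtain ⟨y₂, hy₁y₂, hy₂0, hy₂k⟩ :=
    phase2 (hg := hg0) (γ := γ)
      (Finset.univ.filter (fun i => i ≠ 0 ∧ y₁ i ≠ (1, 1))).card y₁ le_rfl hy₁0
  obtain ⟨y₃, hy₂y₃, hy₃0, hy₃k⟩ :=
    phase3 (hg := hg0) (γ := γ) hm hg hcase y₂ hy₂0 hy₂k
  obtain ⟨σ, hσ, hσx⟩ := (hxy₁.trans (hy₁y₂.trans hy₂y₃))
  refine ⟨σ, hσ, ?_, ?_⟩
  · rw [hzero, hσx]
    exact hy₃0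
  · intro i hi
    rw [hzero] at hi
    rw [hσx]
    exact hy₃k i hi
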